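/- Let y ∈ Fix(G_γ) and set z = prox^{D⁻¹}_{γh}(y). Then: (i) z is a minimizer of the primal objective P(x) = f(x)+g(x)+h(x); (ii) prox^{D⁻¹}_{γh}(y) = prox^{D⁻¹}_{γg}(2z − y − γ D∇f(z)); and (iii) u = D⁻¹(y − z)/γ is a minimizer of the dual objective D(u) = (f+g)*(−u) + h*(u). -/

import Mathlib

open Finset
open scoped RealInnerProductSpace

noncomputable section

variable {p : ℕ}

/-- proper, lower semicontinuous, convex extended-real function. -/
structure ProperLscConvex (g : EuclideanSpace ℝ (Fin p) → EReal) : Prop where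
  proper : ∃ x, g x ≠ ⊤
  ne_bot : ∀ x, g x ≠ ⊥
  lsc : LowerSemicontinuous g
  convex : ∀ x y : EuclideanSpace ℝ (Fin p), ∀ a b : ℝ, 0 ≤ a → 0 ≤ b → a + b = 1 →
    g (a • x + b • y) ≤ (a : EReal) * g x + (b : EReal) * g y

/-- the squared `D⁻¹`-norm for the diagonal matrix `D = diag d`. -/
def sqDinv (d : Fin p → ℝ) (v : EuclideanSpace ℝ (Fin p)) : ℝ :=
  ∑ j, (d j)⁻¹ * (v j) ^ 2

/-- `z = prox^{D⁻¹}_{γ g}(x)`. -/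
def IsProxDinv (d : Fin p → ℝ) (γ : ℝ) (g : EuclideanSpace ℝ (Fin p) → EReal)
    (x z : EuclideanSpace ℝ (Fin p)) : Prop :=
  ∀ w, g z + ((1 / (2 * γ) * sqDinv d (x - z) : ℝ) : EReal)
      ≤ g w + ((1 / (2 * γ) * sqDinv d (x - w) : ℝ) : EReal)

/-- Fenchel conjugate. -/
def fconj (g : EuclideanSpace ℝ (Fin p) → EReal) (u : EuclideanSpace ℝ (Fin p)) : EReal :=
  ⨆ x, ((⟪x, u⟫ : ℝ) : EReal) - g x

lemma aux_le_of_forall_t {a b C : ℝ} (H : ∀ t : ℝ, 0 < t → t ≤ 1 → a ≤ b + t * C) : a ≤ b := by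
  refine le_of_forall_pos_le_add fun ε hε => ?_
  have hC : 0 < |C| + 1 := by positivity
  set t := min 1 (ε / (|C| + 1)) with ht
  have ht0 : 0 < t := lt_min one_pos (by positivity)
  have ht1 : t ≤ 1 := min_le_left _ _
  have htu : t ≤ ε / (|C| + 1) := min_le_right _ _
  have h2 : t * C ≤ ε := by
    calc t * C ≤ t * |C| := by nlinarith [le_abs_self C]
    _ ≤ (ε / (|C| + 1)) * (|C| + 1) := by nlinarith [abs_nonneg C]
    _ = ε := by field_simp
  linarith [H t ht0 ht1]

lemma aux_grad_ineq {n : ℕ} (f : EuclideanSpace ℝ (Fin n) → ℝ)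
    (hfconv : ConvexOn ℝ Set.univ f) (z x G : EuclideanSpace ℝ (Fin n))
    (hG : HasGradientAt f G z) : f z ≤ f x + ⟪G, z - x⟫ := by
  set v := x - z with hv
  have hline : HasDerivAt (fun t : ℝ => z + t • v) v 0 := by
    simpa using ((hasDerivAt_id (0:ℝ)).smul_const v).const_add z
  have hcomp : HasDerivAt (fun t : ℝ => f (z + t • v)) ⟪G, v⟫ 0 := by
    have h0 : HasFDerivAt f ((InnerProductSpace.toDual ℝ (EuclideanSpace ℝ (Fin n))) G)
        (z + (0:ℝ) • v) := by simpa using hG.hasFDerivAt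
    have := h0.comp_hasDerivAt 0 hline
    exact this
  have hslope : Filter.Tendsto (fun t : ℝ => (f (z + t • v) - f z) / t)
      (nhdsWithin 0 (Set.Ioi 0)) (nhds ⟪G, v⟫) := by
    have h1 := hcomp.hasDerivWithinAt (s := Set.Ioi (0:ℝ))
    have h3 := hasDerivWithinAt_iff_tendsto_slope.mp h1
    have h2 : Set.Ioi (0:ℝ) \ {0} = Set.Ioi 0 := by
      ext t; simp only [Set.mem_diff, Set.mem_Ioi, Set.mem_singleton_iff, and_iff_left_iff_imp]
      intro ht; exact ne_of_gt ht
    rw [h2] at h3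
    refine h3.congr' ?_
    filter_upwards [self_mem_nhdsWithin] with t ht
    simp only [slope_def_field]
    rw [div_eq_div_iff (by simpa using ne_of_gt ht) (by simpa using ne_of_gt ht)]
    rw [zero_smul, add_zero]
    ring
  have hbound : ∀ᶠ t in nhdsWithin (0:ℝ) (Set.Ioi 0),
      (f (z + t • v) - f z) / t ≤ f x - f z := by
    filter_upwards [Ioc_mem_nhdsGT_of_mem (Set.mem_Ico.mpr ⟨le_refl (0:ℝ), one_pos⟩)] with t ht
    have ht0 : 0 < t := ht.1
    have ht1 : t ≤ 1 := ht.2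
    have hc := hfconv.2 (Set.mem_univ z) (Set.mem_univ x)
      (show (0:ℝ) ≤ 1 - t by linarith) (le_of_lt ht0) (by ring : (1 - t) + t = 1)
    have hpt : (1 - t) • z + t • x = z + t • v := by rw [hv]; module
    rw [hpt] at hc
    rw [div_le_iff₀ ht0]
    simp only [smul_eq_mul] at hc
    nlinarith
  have hle : ⟪G, v⟫ ≤ f x - f z := le_of_tendsto hslope hbound
  have hinner : ⟪G, z - x⟫ = -⟪G, v⟫ := by
    rw [hv, ← inner_neg_right]; congr 1; abel
  rw [hinner]; linarith

lemma aux_prox_finite (d : Fin p → ℝ) (γ : ℝ) (φ : EuclideanSpace ℝ (Fin p) → EReal)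
    (hproper : ∃ w, φ w ≠ ⊤) (hnebot : ∀ w, φ w ≠ ⊥)
    (x z : EuclideanSpace ℝ (Fin p)) (hz : IsProxDinv d γ φ x z) :
    ∃ c : ℝ, φ z = (c : EReal) := by
  obtain ⟨w0, hw0⟩ := hproper
  obtain ⟨c0, hc0⟩ := (CanLift.prf (φ w0) ⟨hw0, hnebot w0⟩ : ∃ c0 : ℝ, (c0 : EReal) = φ w0)
  have h1 := hz w0
  rw [← hc0, ← EReal.coe_add] at h1
  have hne : φ z ≠ ⊤ := by
    intro htop
    rw [htop, EReal.top_add_coe] at h1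
    exact absurd h1 (not_le.mpr (EReal.coe_lt_top _))
  obtain ⟨c, hc⟩ := (CanLift.prf (φ z) ⟨hne, hnebot z⟩ : ∃ c : ℝ, (c : EReal) = φ z)
  exact ⟨c, hc.symm⟩

lemma aux_prox_subgrad (d : Fin p → ℝ) (γ : ℝ) (hγ : 0 < γ)
    (φ : EuclideanSpace ℝ (Fin p) → EReal) (hφ : ProperLscConvex φ)
    (x z : EuclideanSpace ℝ (Fin p)) (hz : IsProxDinv d γ φ x z)
    (cz cw : ℝ) (hcz : φ z = (cz : EReal)) (w : EuclideanSpace ℝ (Fin p))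
    (hcw : φ w = (cw : EReal)) :
    cz ≤ cw + γ⁻¹ * ∑ j, (d j)⁻¹ * (x j - z j) * (z j - w j) := by
  set S := ∑ j, (d j)⁻¹ * (x j - z j) * (z j - w j) with hS
  apply aux_le_of_forall_t (C := 1 / (2 * γ) * sqDinv d (w - z))
  intro t ht0 ht1
  set wt : EuclideanSpace ℝ (Fin p) := z + t • (w - z) with hwt
  have hpt : (1 - t) • z + t • w = wt := by rw [hwt]; module
  have hconv := hφ.convex z w (1 - t) t (by linarith) ht0.le (by ring)
  rw [hpt, hcz, hcw, ← EReal.coe_mul, ← EReal.coe_mul, ← EReal.coe_add] at hconv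
  have hprox := hz wt
  rw [hcz, ← EReal.coe_add] at hprox
  have hchain : ((cz + 1 / (2 * γ) * sqDinv d (x - z) : ℝ) : EReal)
      ≤ (((1 - t) * cz + t * cw + 1 / (2 * γ) * sqDinv d (x - wt) : ℝ) : EReal) := by
    rw [EReal.coe_add ((1 - t) * cz + t * cw)]
    exact le_trans hprox (add_le_add hconv le_rfl)
  have hr := EReal.coe_le_coe_iff.mp hchain
  have key : sqDinv d (x - wt) = sqDinv d (x - z) + 2 * t * S + t ^ 2 * sqDinv d (w - z) := by
    simp only [sqDinv, hS, hwt, PiLp.sub_apply, PiLp.add_apply, PiLp.smul_apply, smul_eq_mul,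
      Finset.mul_sum, ← Finset.sum_add_distrib]
    apply Finset.sum_congr rfl
    intro j _
    ring
  rw [key] at hr
  have e2 : 1 / (2 * γ) * (sqDinv d (x - z) + 2 * t * S + t ^ 2 * sqDinv d (w - z))
      = 1 / (2 * γ) * sqDinv d (x - z) + 1 / (2 * γ) * (2 * t * S)
        + 1 / (2 * γ) * (t ^ 2 * sqDinv d (w - z)) := by ring
  rw [e2] at hr
  have goal' : t * cz ≤ t * (cw + γ⁻¹ * S + t * (1 / (2 * γ) * sqDinv d (w - z))) := by
    have e : t * (cw + γ⁻¹ * S + t * (1 / (2 * γ) * sqDinv d (w - z)))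
        = t * cw + 1 / (2 * γ) * (2 * t * S) + 1 / (2 * γ) * (t ^ 2 * sqDinv d (w - z)) := by
      field_simp
    rw [e]
    linarith
  exact le_of_mul_le_mul_left goal' ht0

/-- minimizers from a fixed point.  If `y ∈ Fix(G_γ)` and
`z = prox^{D⁻¹}_{γh}(y)`, then (i) `z` minimizes the primal objective `P = f + g + h`;
(ii) `prox^{D⁻¹}_{γh}(y) = prox^{D⁻¹}_{γg}(2z − y − γ D ∇f(z))`; and
(iii) `u = D⁻¹(y − z)/γ` minimizes the dual objective `D(u) = (f+g)*(−u) + h*(u)`. -/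
theorem fixed_point_gives_minimizers
    (f : EuclideanSpace ℝ (Fin p) → ℝ)
    (hfconv : ConvexOn ℝ Set.univ f)
    (gradf : EuclideanSpace ℝ (Fin p) → EuclideanSpace ℝ (Fin p))
    (hfdiff : ∀ x, HasGradientAt f (gradf x) x)
    (Lf : ℝ) (hflip : ∀ x y, ‖gradf x - gradf y‖ ≤ Lf * ‖x - y‖)
    (g h : EuclideanSpace ℝ (Fin p) → EReal)
    (hg : ProperLscConvex g) (hh : ProperLscConvex h)
    (hqual : (intrinsicInterior ℝ {x | g x ≠ ⊤} ∩ intrinsicInterior ℝ {x | h x ≠ ⊤}).Nonempty)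
    (d : Fin p → ℝ) (hd : ∀ j, 0 < d j)
    (Dop Dinvop : EuclideanSpace ℝ (Fin p) → EuclideanSpace ℝ (Fin p))
    (hDop : ∀ v j, Dop v j = d j * v j)
    (hDinvop : ∀ v j, Dinvop v j = (d j)⁻¹ * v j)
    (γ : ℝ) (hγ : 0 < γ)
    (proxg proxh : EuclideanSpace ℝ (Fin p) → EuclideanSpace ℝ (Fin p))
    (hproxg : ∀ x, IsProxDinv d γ g x (proxg x))
    (hproxh : ∀ x, IsProxDinv d γ h x (proxh x))
    -- the operator G_γ
    (G : EuclideanSpace ℝ (Fin p) → EuclideanSpace ℝ (Fin p))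
    (hG : ∀ y, G y = y - proxh y + proxg (2 • proxh y - y - γ • Dop (gradf (proxh y))))
    -- primal and dual objectives
    (P : EuclideanSpace ℝ (Fin p) → EReal)
    (hP : ∀ x, P x = ((f x : ℝ) : EReal) + g x + h x)
    (Dobj : EuclideanSpace ℝ (Fin p) → EReal)
    (hDobj : ∀ u, Dobj u = fconj (fun x => ((f x : ℝ) : EReal) + g x) (-u) + fconj h u)
    -- a fixed point y of G_γ, and z = prox^{D⁻¹}_{γh}(y)
    (y : EuclideanSpace ℝ (Fin p)) (hy : G y = y)
    (z : EuclideanSpace ℝ (Fin p)) (hzdef : z = proxh y) :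
    (∀ x', P z ≤ P x') ∧
      proxh y = proxg (2 • z - y - γ • Dop (gradf z)) ∧
      (∀ u', Dobj (γ⁻¹ • Dinvop (y - z)) ≤ Dobj u') := by
  -- part (ii)
  set xg : EuclideanSpace ℝ (Fin p) := 2 • z - y - γ • Dop (gradf z) with hxgdef
  have h1 := hG y
  rw [hy, ← hzdef] at h1
  -- h1 : y = y - z + proxg xg
  have hz_eq : proxg xg = z := by
    have h3 : (y - z) + proxg xg = y := by rw [← h1]
    have h4 := eq_sub_of_add_eq' h3
    rw [h4, sub_sub_cancel]
  have hii : proxh y = proxg xg := by rw [hz_eq, ← hzdef]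
  -- prox facts for z
  have hzproxh : IsProxDinv d γ h y z := by rw [hzdef]; exact hproxh y
  have hzproxg : IsProxDinv d γ g xg z := by rw [← hz_eq]; exact hproxg xg
  -- finite values
  obtain ⟨ch, hch⟩ := aux_prox_finite d γ h hh.proper hh.ne_bot y z hzproxh
  obtain ⟨cg, hcg⟩ := aux_prox_finite d γ g hg.proper hg.ne_bot xg z hzproxg
  -- componentwise description of xg - z
  have hxgz : ∀ j, xg j - z j = z j - y j - γ * (d j * gradf z j) := by
    intro j
    simp only [hxgdef, PiLp.sub_apply, PiLp.smul_apply, smul_eq_mul, hDop]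
    push_cast
    ring
  -- inner products as sums
  have hip : ∀ a b : EuclideanSpace ℝ (Fin p), ⟪a, b⟫ = ∑ j, a j * b j := by
    intro a b
    simp [PiLp.inner_apply, RCLike.inner_apply, conj_trivial]
    exact Finset.sum_congr rfl (fun j _ => mul_comm _ _)
  set ustar : EuclideanSpace ℝ (Fin p) := γ⁻¹ • Dinvop (y - z) with hustar
  have hust : ∀ j, ustar j = γ⁻¹ * ((d j)⁻¹ * (y j - z j)) := by
    intro j
    simp only [hustar, PiLp.smul_apply, smul_eq_mul, hDinvop, PiLp.sub_apply]
  -- the "SA" sum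
  have hIP : ∀ x : EuclideanSpace ℝ (Fin p),
      ⟪z, ustar⟫ - ⟪x, ustar⟫ = γ⁻¹ * ∑ j, (d j)⁻¹ * (y j - z j) * (z j - x j) := by
    intro x
    rw [hip, hip, Finset.mul_sum, ← Finset.sum_sub_distrib]
    apply Finset.sum_congr rfl
    intro j _
    rw [hust j]
    ring
  -- F1 : subgradient inequality for h
  have F1 : ∀ w (chw : ℝ), h w = (chw : EReal) →
      ch ≤ chw + γ⁻¹ * ∑ j, (d j)⁻¹ * (y j - z j) * (z j - w j) := by
    intro w chw hw
    exact aux_prox_subgrad d γ hγ h hh y z hzproxh ch chw hch w hw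
  -- pointwise identity relating the g-prox linear term to the h one and the gradient
  have hsum_eq : ∀ w : EuclideanSpace ℝ (Fin p),
      ∑ j, (d j)⁻¹ * (xg j - z j) * (z j - w j)
        = -(∑ j, (d j)⁻¹ * (y j - z j) * (z j - w j)) - γ * ∑ j, gradf z j * (z j - w j) := by
    intro w
    have hpt : ∀ j ∈ Finset.univ, (d j)⁻¹ * (xg j - z j) * (z j - w j)
        = -((d j)⁻¹ * (y j - z j) * (z j - w j)) - γ * (gradf z j * (z j - w j)) := by
      intro j _
      have hdj : d j ≠ 0 := (hd j).ne'
      rw [hxgz j]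
      field_simp
      ring
    rw [Finset.sum_congr rfl hpt, Finset.sum_sub_distrib, Finset.sum_neg_distrib,
      ← Finset.mul_sum]
  -- F2 : combined f + g inequality
  have F2 : ∀ w (cgw : ℝ), g w = (cgw : EReal) →
      f z + cg ≤ f w + cgw - γ⁻¹ * ∑ j, (d j)⁻¹ * (y j - z j) * (z j - w j) := by
    intro w cgw hw
    have hgsub := aux_prox_subgrad d γ hγ g hg xg z hzproxg cg cgw hcg w hw
    rw [hsum_eq w] at hgsub
    have hgrad := aux_grad_ineq f hfconv z w (gradf z) (hfdiff z)
    have hin : ⟪gradf z, z - w⟫ = ∑ j, gradf z j * (z j - w j) := by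
      rw [hip]
      apply Finset.sum_congr rfl
      intro j _
      rw [PiLp.sub_apply]
    rw [hin] at hgrad
    have hγinv : γ⁻¹ * γ = 1 := inv_mul_cancel₀ hγ.ne'
    have expand : γ⁻¹ * (-(∑ j, (d j)⁻¹ * (y j - z j) * (z j - w j))
        - γ * ∑ j, gradf z j * (z j - w j))
        = -(γ⁻¹ * ∑ j, (d j)⁻¹ * (y j - z j) * (z j - w j))
          - ∑ j, gradf z j * (z j - w j) := by
      rw [mul_sub, mul_neg, ← mul_assoc, inv_mul_cancel₀ hγ.ne', one_mul]
    rw [expand] at hgsub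
    linarith
  refine ⟨?_, hii, ?_⟩
  -- part (i)
  · intro x'
    rw [hP, hP, hch, hcg]
    by_cases hgx : g x' = ⊤
    · have htop : ((f x' : ℝ) : EReal) + g x' + h x' = ⊤ := by
        rw [hgx, EReal.add_top_of_ne_bot (EReal.coe_ne_bot _),
          EReal.top_add_of_ne_bot (hh.ne_bot x')]
      rw [htop]
      exact le_top
    by_cases hhx : h x' = ⊤
    · have hnb : ((f x' : ℝ) : EReal) + g x' ≠ ⊥ := by
        intro hbot
        rcases EReal.add_eq_bot_iff.mp hbot with h' | h'
        · exact EReal.coe_ne_bot _ h'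
        · exact hg.ne_bot x' h'
      have htop : ((f x' : ℝ) : EReal) + g x' + h x' = ⊤ := by
        rw [hhx, EReal.add_top_of_ne_bot hnb]
      rw [htop]
      exact le_top
    obtain ⟨cgx, hcgx⟩ := (CanLift.prf (g x') ⟨hgx, hg.ne_bot x'⟩ : ∃ c : ℝ, (c : EReal) = g x')
    obtain ⟨chx, hchx⟩ := (CanLift.prf (h x') ⟨hhx, hh.ne_bot x'⟩ : ∃ c : ℝ, (c : EReal) = h x')
    rw [← hcgx, ← hchx, ← EReal.coe_add, ← EReal.coe_add, ← EReal.coe_add, ← EReal.coe_add,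
      EReal.coe_le_coe_iff]
    have e1 := F1 x' chx hchx.symm
    have e2 := F2 x' cgx hcgx.symm
    linarith
  -- part (iii)
  · intro u'
    rw [hDobj, hDobj]
    have upper_h : fconj h ustar ≤ ((⟪z, ustar⟫ - ch : ℝ) : EReal) := by
      apply iSup_le
      intro x
      by_cases hx : h x = ⊤
      · rw [hx, EReal.sub_top]
        exact bot_le
      obtain ⟨chx, hchx⟩ := (CanLift.prf (h x) ⟨hx, hh.ne_bot x⟩ : ∃ c : ℝ, (c : EReal) = h x)
      rw [← hchx, ← EReal.coe_sub, EReal.coe_le_coe_iff]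
      have e1 := F1 x chx hchx.symm
      have e3 := hIP x
      linarith
    have upper_fg : fconj (fun x => ((f x : ℝ) : EReal) + g x) (-ustar)
        ≤ ((⟪z, -ustar⟫ - (f z + cg) : ℝ) : EReal) := by
      apply iSup_le
      intro x
      show ((⟪x, -ustar⟫ : ℝ) : EReal) - (((f x : ℝ) : EReal) + g x) ≤ _
      by_cases hx : g x = ⊤
      · rw [hx, EReal.add_top_of_ne_bot (EReal.coe_ne_bot _), EReal.sub_top]
        exact bot_le
      obtain ⟨cgx, hcgx⟩ := (CanLift.prf (g x) ⟨hx, hg.ne_bot x⟩ : ∃ c : ℝ, (c : EReal) = g x)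
      rw [← hcgx, ← EReal.coe_add, ← EReal.coe_sub, EReal.coe_le_coe_iff]
      have e2 := F2 x cgx hcgx.symm
      have e3 := hIP x
      have e4 : ⟪x, -ustar⟫ = -⟪x, ustar⟫ := inner_neg_right x ustar
      have e5 : ⟪z, -ustar⟫ = -⟪z, ustar⟫ := inner_neg_right z ustar
      linarith
    have lower : ∀ u'' : EuclideanSpace ℝ (Fin p),
        (((⟪z, -u''⟫ - (f z + cg)) + (⟪z, u''⟫ - ch) : ℝ) : EReal)
          ≤ fconj (fun x => ((f x : ℝ) : EReal) + g x) (-u'') + fconj h u'' := by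
      intro u''
      rw [EReal.coe_add]
      apply add_le_add
      · have hle := le_iSup (fun x => ((⟪x, -u''⟫ : ℝ) : EReal) - (((f x : ℝ) : EReal) + g x)) z
        refine le_trans ?_ hle
        show _ ≤ ((⟪z, -u''⟫ : ℝ) : EReal) - (((f z : ℝ) : EReal) + g z)
        rw [hcg, ← EReal.coe_add, ← EReal.coe_sub]
      · have hle := le_iSup (fun x => ((⟪x, u''⟫ : ℝ) : EReal) - h x) z
        refine le_trans ?_ hle
        show _ ≤ ((⟪z, u''⟫ : ℝ) : EReal) - h z
        rw [hch, ← EReal.coe_sub]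
    have hconst : ∀ u'' : EuclideanSpace ℝ (Fin p),
        (⟪z, -u''⟫ - (f z + cg)) + (⟪z, u''⟫ - ch) = -(f z + cg + ch) := by
      intro u''
      rw [inner_neg_right]
      ring
    calc fconj (fun x => ((f x : ℝ) : EReal) + g x) (-ustar) + fconj h ustar
        ≤ ((⟪z, -ustar⟫ - (f z + cg) : ℝ) : EReal) + ((⟪z, ustar⟫ - ch : ℝ) : EReal) :=
          add_le_add upper_fg upper_h
      _ = (((⟪z, -ustar⟫ - (f z + cg)) + (⟪z, ustar⟫ - ch) : ℝ) : EReal) := by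
          rw [EReal.coe_add]
      _ = (((⟪z, -u'⟫ - (f z + cg)) + (⟪z, u'⟫ - ch) : ℝ) : EReal) := by
          rw [hconst, hconst]
      _ ≤ _ := lower u'
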